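/- For every involutive antimorphism Θ of {0,1}*, the Thue-Morse word u_TM has infinite Θ-defect, i.e., the Thue-Morse word is not almost Θ-rich for any antimorphism Θ. -/

import Mathlib

open scoped Classical

/-- The finite word `w` occurs in the infinite word `u` at position `i`. -/
def OccursAt {A : Type*} (u : ℕ → A) (w : List A) (i : ℕ) : Prop :=
  w = (List.range w.length).map fun k => u (i + k)

/-- The finite word `w` is a factor of the infinite word `u`. -/
def IsFactor {A : Type*} (u : ℕ → A) (w : List A) : Prop :=
  ∃ i, OccursAt u w i

/-- The (involutive) antimorphism of `A*` induced by the letter map `θ`: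
it reverses a word and applies `θ` letterwise. -/
def antim {A : Type*} (θ : A → A) (w : List A) : List A :=
  (w.map θ).reverse

/-- `w` is a `θ`-palindrome, i.e. a fixed point of the antimorphism induced by `θ`. -/
def IsPalin {A : Type*} (θ : A → A) (w : List A) : Prop :=
  antim θ w = w

/-- Factor complexity of the infinite word `u`. -/
noncomputable def fC {A : Type*} (u : ℕ → A) (n : ℕ) : ℕ :=
  Set.ncard {w : List A | w.length = n ∧ IsFactor u w}

/-- `θ`-palindromic complexity of the infinite word `u`. -/
noncomputable def fP {A : Type*} (u : ℕ → A) (θ : A → A) (n : ℕ) : ℕ :=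
  Set.ncard {w : List A | w.length = n ∧ IsFactor u w ∧ IsPalin θ w}

/-- `γ_Θ(w)`: the number of pairs `{a, θ a}` with `a` occurring in `w` and `a ≠ θ a`. -/
noncomputable def gammaTheta {A : Type*} (θ : A → A) (w : List A) : ℕ :=
  Set.ncard {s : Set A | ∃ a ∈ w, θ a ≠ a ∧ s = {a, θ a}}

/-- The set of `θ`-palindromic factors of the finite word `w`. -/
def palFactors {A : Type*} (θ : A → A) (w : List A) : Set (List A) :=
  {p | p <:+: w ∧ IsPalin θ p}

/-- The `Θ`-defect of a finite word `w`. -/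
noncomputable def defect {A : Type*} (θ : A → A) (w : List A) : ℤ :=
  (w.length : ℤ) + 1 - gammaTheta θ w - Set.ncard (palFactors θ w)

/-- The number of occurrences of `w` in the finite word `v`. -/
noncomputable def numOcc {A : Type*} (w v : List A) : ℕ :=
  Set.ncard {i : ℕ | i + w.length ≤ v.length ∧ w <+: v.drop i}

/-- The Thue-Morse word over `{0,1}` (`false = 0`, `true = 1`): its `n`-th letter is
the parity of the sum of binary digits of `n`. -/
def tm : ℕ → Bool := fun n => (Nat.digits 2 n).sum % 2 == 1

lemma tm_rec (n : ℕ) (h : n ≠ 0) : tm n = xor (decide (n % 2 = 1)) (tm (n / 2)) := by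
  unfold tm
  rw [Nat.digits_def' (by norm_num : 1 < 2) (Nat.pos_of_ne_zero h)]
  simp only [List.sum_cons]
  rcases Nat.mod_two_eq_zero_or_one n with h2 | h2 <;>
  · rw [h2]
    rcases Nat.mod_two_eq_zero_or_one ((Nat.digits 2 (n/2)).sum) with h3 | h3 <;>
    · rw [Nat.add_mod, h3]; simp [h3]

lemma tm0 : tm 0 = false := by simp [tm]

lemma tm_two (n : ℕ) : tm (2 * n) = tm n := by
  rcases Nat.eq_zero_or_pos n with rfl | hn
  · rfl
  · rw [tm_rec (2*n) (by omega)]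
    have h1 : (2*n) % 2 = 0 := by omega
    have h2 : (2*n) / 2 = n := by omega
    rw [h1, h2]; simp

lemma tm_odd (n : ℕ) : tm (2 * n + 1) = !tm n := by
  rw [tm_rec (2*n+1) (by omega)]
  have h1 : (2*n+1) % 2 = 1 := by omega
  have h2 : (2*n+1) / 2 = n := by omega
  rw [h1, h2]; simp [Bool.xor_comm]

lemma tm1 : tm 1 = true := by rw [show (1:ℕ) = 2*0+1 from rfl, tm_odd, tm0]; rfl
lemma tm2 : tm 2 = true := by rw [show (2:ℕ) = 2*1 from rfl, tm_two, tm1]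
lemma tm3 : tm 3 = false := by rw [show (3:ℕ) = 2*1+1 from rfl, tm_odd, tm1]; rfl
lemma tm4 : tm 4 = true := by rw [show (4:ℕ) = 2*2 from rfl, tm_two, tm2]
lemma tm5 : tm 5 = false := by rw [show (5:ℕ) = 2*2+1 from rfl, tm_odd, tm2]; rfl
lemma tm6 : tm 6 = false := by rw [show (6:ℕ) = 2*3 from rfl, tm_two, tm3]
lemma tm11 : tm 11 = true := by rw [show (11:ℕ) = 2*5+1 from rfl, tm_odd, tm5]; rfl
lemma tm12 : tm 12 = false := by rw [show (12:ℕ) = 2*6 from rfl, tm_two, tm6]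

/-- no three consecutive equal letters -/
lemma no3 (x : ℕ) : ¬ (tm x = tm (x+1) ∧ tm (x+1) = tm (x+2)) := by
  rintro ⟨h1, h2⟩
  rcases Nat.even_or_odd x with ⟨y, hy⟩ | ⟨y, hy⟩
  · subst hy
    rw [show y + y = 2*y by ring, tm_two, show 2*y+1 = 2*y+1 from rfl] at h1
    rw [show 2*y + 1 = 2*y+1 from rfl, tm_odd] at h1
    simp at h1
  · subst hy
    rw [show 2*y+1+1 = 2*(y+1) by ring, tm_two, show 2*y+1+2 = 2*(y+1)+1 by ring, tm_odd] at h2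
    simp at h2

/-- no palindromic factor of length 5 -/
lemma no5 (c : ℕ) : ¬ (tm (c+1) = tm (c+3) ∧ tm c = tm (c+4)) := by
  rintro ⟨h1, h2⟩
  rcases Nat.even_or_odd c with ⟨x, hx⟩ | ⟨x, hx⟩
  · subst hx
    rw [show x+x+1 = 2*x+1 by ring, show x+x+3 = 2*(x+1)+1 by ring, tm_odd, tm_odd] at h1
    rw [show x+x = 2*x by ring, show 2*x+4 = 2*(x+2) by ring, tm_two, tm_two] at h2
    simp at h1
    exact no3 x ⟨h1, h1 ▸ h2⟩
  · subst hx
    rw [show 2*x+1+1 = 2*(x+1) by ring, show 2*x+1+3 = 2*(x+2) by ring, tm_two, tm_two] at h1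
    rw [show 2*x+1+4 = 2*(x+2)+1 by ring, tm_odd, tm_odd] at h2
    simp at h2
    exact no3 x ⟨h2 ▸ h1.symm ▸ rfl, h1⟩

/-- the window `[a, a+ℓ)` of `tm` is a palindrome -/
def Pal (a ℓ : ℕ) : Prop := ∀ i j, i + j + 1 = ℓ → tm (a + i) = tm (a + j)
/-- the window `[a, a+ℓ)` of `tm` is an antipalindrome -/
def Anti (a ℓ : ℕ) : Prop := ∀ i j, i + j + 1 = ℓ → tm (a + i) = !tm (a + j)
/-- the window `[b, b+ℓ)` is another occurrence of the window `[a, a+ℓ)` -/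
def Occ (a b ℓ : ℕ) : Prop := ∀ i < ℓ, tm (b + i) = tm (a + i)

/-- values: tm (3·4^m - 1) = true and tm (6·4^m - 1) = false -/
lemma v23 (m : ℕ) : tm (3 * 4^m - 1) = true ∧ tm (6 * 4^m - 1) = false := by
  induction m with
  | zero => simpa using ⟨tm2, tm5⟩
  | succ k ih =>
    have hp : (4:ℕ)^(k+1) = 4 * 4^k := by ring
    have h4 : 0 < (4:ℕ)^k := Nat.pow_pos (by norm_num)
    have e1 : 3 * 4^(k+1) - 1 = 2 * (6 * 4^k - 1) + 1 := by rw [hp]; omega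
    have e2 : 6 * 4^(k+1) - 1 = 2 * (3 * 4^(k+1) - 1) + 1 := by rw [hp]; omega
    constructor
    · rw [e1, tm_odd, ih.2]; rfl
    · rw [e2, tm_odd, e1, tm_odd, ih.2]; rfl

lemma v4 (m : ℕ) : tm (6 * 4^m) = false := by
  induction m with
  | zero => simpa using tm6
  | succ k ih =>
    have e : 6 * 4^(k+1) = 2 * (2 * (6 * 4^k)) := by ring
    rw [e, tm_two, tm_two, ih]

lemma antiOdd (a u : ℕ) (h : Anti a (2*u+1)) : False := by
  have := h u u (by ring)
  simp at this

lemma palOddLong (a u : ℕ) (hu : 2 ≤ u) (h : Pal a (2*u+1)) : False := by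
  obtain ⟨u', rfl⟩ : ∃ u', u = u' + 2 := ⟨u - 2, by omega⟩
  refine no5 (a + u') ⟨?_, ?_⟩
  · have := h (u'+1) (u'+3) (by ring)
    rw [show a + (u'+1) = a + u' + 1 by ring, show a + (u'+3) = a + u' + 3 by ring] at this
    exact this
  · have := h u' (u'+4) (by ring)
    rw [show a + (u'+4) = a + u' + 4 by ring] at this
    exact this

/-- descent: palindrome ending at odd position gives antipalindrome at half scale -/
lemma descentPal (a' s : ℕ) (hs : 1 ≤ s) (h : Pal (2*a'+1) (2*s)) : Anti a' (s+1) := by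
  intro i j hij
  rcases Nat.eq_zero_or_pos j with rfl | hj
  · -- j = 0, i = s ≥ 1
    obtain ⟨i', rfl⟩ : ∃ i', i = i' + 1 := ⟨i - 1, by omega⟩
    have := h (2*i'+1) 0 (by omega)
    rw [show 2*a'+1 + (2*i'+1) = 2*(a' + (i'+1)) by ring, tm_two,
        show 2*a'+1 + 0 = 2*a' + 1 by ring, tm_odd] at this
    rw [this]; simp
  · obtain ⟨j', rfl⟩ : ∃ j', j = j' + 1 := ⟨j - 1, by omega⟩
    have := h (2*i) (2*j'+1) (by omega)
    rw [show 2*a'+1 + 2*i = 2*(a'+i) + 1 by ring, tm_odd,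
        show 2*a'+1 + (2*j'+1) = 2*(a' + (j'+1)) by ring, tm_two] at this
    rw [← this]; simp

/-- descent: antipalindrome ending at odd position gives palindrome at half scale -/
lemma descentAnti (a' s : ℕ) (hs : 1 ≤ s) (h : Anti (2*a'+1) (2*s)) : Pal a' (s+1) := by
  intro i j hij
  rcases Nat.eq_zero_or_pos j with rfl | hj
  · obtain ⟨i', rfl⟩ : ∃ i', i = i' + 1 := ⟨i - 1, by omega⟩
    have := h (2*i'+1) 0 (by omega)
    rw [show 2*a'+1 + (2*i'+1) = 2*(a' + (i'+1)) by ring, tm_two,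
        show 2*a'+1 + 0 = 2*a' + 1 by ring, tm_odd] at this
    rw [this]; simp
  · obtain ⟨j', rfl⟩ : ∃ j', j = j' + 1 := ⟨j - 1, by omega⟩
    have := h (2*i) (2*j'+1) (by omega)
    rw [show 2*a'+1 + 2*i = 2*(a'+i) + 1 by ring, tm_odd,
        show 2*a'+1 + (2*j'+1) = 2*(a' + (j'+1)) by ring, tm_two] at this
    simpa using this

/-- lift an occurrence at half scale back up -/
lemma liftOcc (a' b' s : ℕ) (h : Occ a' b' (s+1)) : Occ (2*a'+1) (2*b'+1) (2*s) := by
  intro i hi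
  rcases Nat.even_or_odd i with ⟨r, hr⟩ | ⟨r, hr⟩
  · subst hr
    rw [show 2*b'+1 + (r+r) = 2*(b'+r) + 1 by ring, tm_odd,
        show 2*a'+1 + (r+r) = 2*(a'+r) + 1 by ring, tm_odd, h r (by omega)]
  · subst hr
    rw [show 2*b'+1 + (2*r+1) = 2*(b' + (r+1)) by ring, tm_two,
        show 2*a'+1 + (2*r+1) = 2*(a' + (r+1)) by ring, tm_two, h (r+1) (by omega)]

def win (a ℓ : ℕ) : List Bool := (List.range ℓ).map (fun k => tm (a + k))

@[simp] lemma win_length (a ℓ : ℕ) : (win a ℓ).length = ℓ := by simp [win]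

lemma win_getElem (a ℓ i : ℕ) (h : i < ℓ) :
    (win a ℓ)[i]'(by simpa using h) = tm (a + i) := by
  simp [win]

lemma factor_win (n : ℕ) : IsFactor tm (win 0 n) :=
  ⟨0, by simp [OccursAt, win]⟩

lemma infix_win {p : List Bool} {n : ℕ} (h : p <:+: win 0 n) :
    ∃ a, a + p.length ≤ n ∧ p = win a p.length := by
  obtain ⟨s, t, hst⟩ := h
  have hlen : s.length + p.length + t.length = n := by
    have := congrArg List.length hst
    simp [List.length_append] at this
    omega
  refine ⟨s.length, by omega, ?_⟩
  apply List.ext_getElem (by simp)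
  intro i h1 h2
  have hip : i < p.length := h1
  have hlt : s.length + i < (s ++ p ++ t).length := by simp [List.length_append]; omega
  have hkey : (s ++ p ++ t)[s.length + i]'hlt = p[i] := by
    rw [List.getElem_append_left (by simp [List.length_append]; omega)]
    rw [List.getElem_append_right (by omega)]
    congr 1
    omega
  have hkey2 : (s ++ p ++ t)[s.length + i]'hlt = (win 0 n)[s.length + i]'(by simpa using (show s.length + i < n by omega)) :=
    List.getElem_of_eq hst hlt
  rw [← hkey, hkey2, win_getElem 0 n _ (by omega), win_getElem s.length p.length i hip]
  simp

lemma palin_win {θ : Bool → Bool} {a ℓ : ℕ} (h : IsPalin θ (win a ℓ)) :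
    ∀ i j, i + j + 1 = ℓ → tm (a + i) = θ (tm (a + j)) := by
  intro i j hij
  have hi : i < ℓ := by omega
  have hi' : i < (antim θ (win a ℓ)).length := by simp [antim]; omega
  have := List.getElem_of_eq h hi'
  rw [win_getElem a ℓ i hi] at this
  simp only [antim] at this
  rw [List.getElem_reverse] at this
  rw [List.getElem_map] at this
  rw [win_getElem a ℓ ((List.map θ (win a ℓ)).length - 1 - i)
      (by simp; omega)] at this
  rw [show a + ((List.map θ (win a ℓ)).length - 1 - i) = a + j by simp; omega] at this
  exact this.symm

lemma occ_win_eq {a b ℓ : ℕ} (h : Occ a b ℓ) : win b ℓ = win a ℓ := by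
  apply List.ext_getElem (by simp)
  intro i h1 h2
  rw [win_getElem b ℓ i (by simpa using h1), win_getElem a ℓ i (by simpa using h1)]
  exact h i (by simpa using h1)

lemma gamma_le (θ : Bool → Bool) (w : List Bool) : gammaTheta θ w ≤ 2 := by
  have hsub : {s : Set Bool | ∃ a ∈ w, θ a ≠ a ∧ s = {a, θ a}} ⊆
      {{false, θ false}, {true, θ true}} := by
    rintro s ⟨a, _, _, rfl⟩
    cases a
    · left; rfl
    · right; rfl
  calc gammaTheta θ w ≤ Set.ncard {{false, θ false}, ({true, θ true} : Set Bool)} :=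
        Set.ncard_le_ncard hsub ((Set.finite_singleton _).insert _)
    _ ≤ _ := by
        refine (Set.ncard_insert_le _ _).trans ?_
        simp

def Astmt (m : ℕ) : Prop :=
  ∀ a ℓ, 1 ≤ ℓ → a + ℓ = 3 * 4^m + 1 → Anti a ℓ → ∃ b, b + ℓ < a + ℓ ∧ Occ a b ℓ
def Pstmt (m : ℕ) : Prop :=
  ∀ a ℓ, 1 ≤ ℓ → a + ℓ = 6 * 4^m + 1 → Pal a ℓ → ∃ b, b + ℓ < a + ℓ ∧ Occ a b ℓ

lemma pow4pos (k : ℕ) : 0 < (4:ℕ)^k := Nat.pow_pos (by norm_num)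

lemma antiEvenContra (k a u : ℕ) (hu : 1 ≤ u) (ha : a + 4*u = 3 * 4^(k+1) + 1)
    (h : Anti a (4*u)) : False := by
  have hp : (4:ℕ)^(k+1) = 4 * 4^k := by ring
  have h4 := pow4pos k
  obtain ⟨a', rfl⟩ : ∃ a', a = 2*a' + 1 := ⟨(a-1)/2, by omega⟩
  have hd : a' + 2*u = 6 * 4^k := by omega
  have hpal : Pal a' (2*u+1) := by
    have := descentAnti a' (2*u) (by omega) (by rw [show 2*(2*u) = 4*u by ring]; exact h)
    simpa using this
  rcases Nat.lt_or_ge u 2 with hu2 | hu2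
  · -- u = 1
    obtain rfl : u = 1 := by omega
    have e1 : a' + 1 = 6 * 4^k - 1 := by omega
    have e2 : a' + 2 = 6 * 4^k := by omega
    have h02 : tm a' = tm (a' + 2) := by
      have := hpal 0 2 (by omega); simpa using this
    refine no3 a' ⟨?_, ?_⟩
    · rw [h02, e1, e2, (v23 k).2, v4 k]
    · rw [e1, e2, (v23 k).2, v4 k]
  · exact palOddLong a' u hu2 hpal

lemma stepP (m : ℕ) (hA : Astmt m) : Pstmt m := by
  intro a ℓ h1 hend hpal
  have h4 := pow4pos m
  rcases Nat.even_or_odd ℓ with ⟨s, hs⟩ | ⟨u, hu⟩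
  · -- even ℓ = 2s
    obtain rfl : ℓ = 2*s := by omega
    have hs1 : 1 ≤ s := by omega
    obtain ⟨a', rfl⟩ : ∃ a', a = 2*a' + 1 := ⟨(a-1)/2, by omega⟩
    have hd : a' + s = 3 * 4^m := by omega
    have hanti : Anti a' (s+1) := descentPal a' s hs1 hpal
    rcases Nat.even_or_odd s with ⟨u, hu⟩ | ⟨u, hu⟩
    · -- s even : s+1 odd antipalindrome, impossible
      exact absurd hanti (by
        intro h
        exact antiOdd a' u (by rw [show 2*u+1 = s+1 by omega]; exact h))
    · -- s odd: recurse
      obtain ⟨b', hb', hocc⟩ := hA a' (s+1) (by omega) (by omega) hanti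
      exact ⟨2*b'+1, by omega, liftOcc a' b' s hocc⟩
  · -- odd ℓ = 2u+1
    obtain rfl : ℓ = 2*u+1 := by omega
    match u, hpal with
    | 0, hpal =>
      refine ⟨0, by omega, ?_⟩
      intro i hi
      obtain rfl : i = 0 := by omega
      have ha : a = 6 * 4^m := by omega
      rw [ha]; simpa using (tm0.trans (v4 m).symm)
    | 1, hpal =>
      exfalso
      have e1 : a + 1 = 6 * 4^m - 1 := by omega
      have e2 : a + 2 = 6 * 4^m := by omega
      have h02 : tm a = tm (a + 2) := by simpa using hpal 0 2 (by omega)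
      refine no3 a ⟨?_, ?_⟩
      · rw [h02, e1, e2, (v23 m).2, v4 m]
      · rw [e1, e2, (v23 m).2, v4 m]
    | (u+2), hpal => exact absurd hpal (fun h => palOddLong a (u+2) (by omega) h)

lemma stepA (m : ℕ) (hP : Pstmt m) : Astmt (m+1) := by
  intro a ℓ h1 hend hanti
  have hp : (4:ℕ)^(m+1) = 4 * 4^m := by ring
  have h4 := pow4pos m
  rcases Nat.even_or_odd ℓ with ⟨s, hs⟩ | ⟨u, hu⟩
  · obtain rfl : ℓ = 2*s := by omega
    have hs1 : 1 ≤ s := by omega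
    rcases Nat.even_or_odd s with ⟨u, hu'⟩ | ⟨u, hu'⟩
    · exact absurd hanti (fun h =>
        antiEvenContra m a u (by omega) (by omega) (by rw [show 4*u = 2*s by omega]; exact h))
    · obtain ⟨a', rfl⟩ : ∃ a', a = 2*a' + 1 := ⟨(a-1)/2, by omega⟩
      have hd : a' + s = 6 * 4^m := by omega
      have hpal : Pal a' (s+1) := descentAnti a' s hs1 hanti
      obtain ⟨b', hb', hocc⟩ := hP a' (s+1) (by omega) (by omega) hpal
      exact ⟨2*b'+1, by omega, liftOcc a' b' s hocc⟩
  · obtain rfl : ℓ = 2*u+1 := by omega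
    exact absurd hanti (fun h => antiOdd a u h)

lemma baseA : Astmt 1 := by
  intro a ℓ h1 hend hanti
  rcases Nat.even_or_odd ℓ with ⟨s, hs⟩ | ⟨u, hu⟩
  · obtain rfl : ℓ = 2*s := by omega
    have hs1 : 1 ≤ s := by omega
    have hs6 : s ≤ 6 := by omega
    rcases Nat.even_or_odd s with ⟨u, hu'⟩ | ⟨u, hu'⟩
    · exact absurd hanti (fun h =>
        antiEvenContra 0 a u (by omega) (by norm_num; omega) (by rw [show 4*u = 2*s by omega]; exact h))
    · obtain ⟨a', rfl⟩ : ∃ a', a = 2*a' + 1 := ⟨(a-1)/2, by omega⟩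
      have hd : a' + s = 6 := by norm_num at hend; omega
      have hpal : Pal a' (s+1) := descentAnti a' s hs1 hanti
      -- s odd, s ≤ 6, so s ∈ {1,3,5}
      have hu3 : u = 0 ∨ u = 1 ∨ u = 2 := by omega
      rcases hu3 with rfl | rfl | rfl
      · -- ℓ = 2, a' = 5
        obtain rfl : a' = 5 := by omega
        refine ⟨2, by omega, ?_⟩
        intro i hi
        have hi2 : i = 0 ∨ i = 1 := by omega
        rcases hi2 with rfl | rfl
        · show tm 2 = tm 11
          rw [tm2, tm11]
        · show tm 3 = tm 12
          rw [tm3, tm12]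
      · -- ℓ = 6, a' = 3
        exfalso
        obtain rfl : a' = 3 := by omega
        have := hpal 1 2 (by omega)
        rw [show (3:ℕ)+1 = 4 from rfl, show (3:ℕ)+2 = 5 from rfl, tm4, tm5] at this
        exact absurd this (by simp)
      · -- ℓ = 10, a' = 1
        exfalso
        obtain rfl : a' = 1 := by omega
        have := hpal 0 5 (by omega)
        rw [show (1:ℕ)+0 = 1 from rfl, show (1:ℕ)+5 = 6 from rfl, tm1, tm6] at this
        exact absurd this (by simp)
  · obtain rfl : ℓ = 2*u+1 := by omega
    exact absurd hanti (fun h => antiOdd a u h)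


lemma claimsAP (m : ℕ) : Astmt (m+1) ∧ Pstmt (m+1) := by
  induction m with
  | zero => exact ⟨baseA, stepP 1 baseA⟩
  | succ k ih =>
    have hA := stepA (k+1) ih.2
    exact ⟨hA, stepP (k+2) hA⟩

section Count

variable (θ : Bool → Bool) (K R : ℕ)

lemma pal_count (hK : 3 ≤ K) (hR : 1 ≤ R)
    (hcl : ∀ m a ℓ, 1 ≤ m → m ≤ R → 1 ≤ ℓ → a + ℓ = K * 4^m + 1 →
      (∀ i j, i + j + 1 = ℓ → tm (a + i) = θ (tm (a + j))) →
      ∃ b, b + ℓ < a + ℓ ∧ Occ a b ℓ) :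
    Set.ncard (palFactors θ (win 0 (K * 4^R + 1))) + R ≤ K * 4^R + 2 := by
  set n := K * 4^R + 1 with hn
  -- the marker set
  set M : Finset ℕ := (Finset.Icc 1 R).image (fun m => K * 4^m + 1) with hM
  have hmono : StrictMono (fun m => K * 4^m + 1) := by
    intro x y hxy
    simp only
    have : (4:ℕ)^x < 4^y := Nat.pow_lt_pow_right (by norm_num) hxy
    have hKp : 0 < K := by omega
    apply Nat.add_lt_add_right
    exact (Nat.mul_lt_mul_left hKp).mpr this
  have hMcard : M.card = R := by
    rw [hM, Finset.card_image_of_injective _ hmono.injective]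
    simp [Nat.card_Icc]
  have hMsub : M ⊆ Finset.range (n + 1) := by
    intro x hx
    rw [hM] at hx
    obtain ⟨m, hm, rfl⟩ := Finset.mem_image.mp hx
    simp only [Finset.mem_Icc] at hm
    have h2 : K * 4^m ≤ K * 4^R := Nat.mul_le_mul_left K (Nat.pow_le_pow_right (by norm_num) hm.2)
    simp only [Finset.mem_range]
    omega
  -- the "first ending position" function
  have hg : ∀ p ∈ palFactors θ (win 0 n), ∃ e, p.length ≤ e ∧ p = win (e - p.length) p.length := by
    intro p hp
    obtain ⟨a, ha, hpw⟩ := infix_win hp.1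
    exact ⟨a + p.length, by omega, by rw [Nat.add_sub_cancel]; exact hpw⟩
  classical
  set g : List Bool → ℕ := fun p =>
    if h : ∃ e, p.length ≤ e ∧ p = win (e - p.length) p.length then Nat.find h else 0 with hgdef
  have hspec : ∀ p ∈ palFactors θ (win 0 n),
      (p.length ≤ g p ∧ p = win (g p - p.length) p.length) ∧
      (∀ e' < g p, ¬ (p.length ≤ e' ∧ p = win (e' - p.length) p.length)) := by
    intro p hp
    have h := hg p hp
    rw [hgdef]
    simp only [dif_pos h]
    exact ⟨Nat.find_spec h, fun e' he' => Nat.find_min h he'⟩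
  set P := palFactors θ (win 0 n) with hP
  -- injectivity on longer-vs-shorter
  have key : ∀ p ∈ P, ∀ q ∈ P, g p = g q → q.length < p.length → False := by
    intro p hp q hq he hlt
    obtain ⟨⟨hle_p, hwp⟩, hmin_p⟩ := hspec p hp
    obtain ⟨⟨hle_q, hwq⟩, hmin_q⟩ := hspec q hq
    rw [← he] at hle_q hwq hmin_q
    set e := g p with hedef
    have hrp : ∀ i j, i + j + 1 = p.length →
        tm (e - p.length + i) = θ (tm (e - p.length + j)) :=
      palin_win (hwp ▸ hp.2)
    have hrq : ∀ i j, i + j + 1 = q.length →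
        tm (e - q.length + i) = θ (tm (e - q.length + j)) :=
      palin_win (hwq ▸ hq.2)
    apply hmin_q (e - p.length + q.length) (by omega)
    refine ⟨by omega, ?_⟩
    rw [Nat.add_sub_cancel]
    apply List.ext_getElem (by rw [win_length])
    intro i h1 h2
    have hiq : i < q.length := h1
    have e1 : q[i] = tm (e - q.length + i) := by
      rw [List.getElem_of_eq hwq h1]
      have := win_length (e - q.length) q.length
      show (win (e - q.length) q.length)[i]'_ = _
      simp [win]
    have e2 : (win (e - p.length) q.length)[i]'h2 = tm (e - p.length + i) := by
      simp [win]
    rw [e1, e2]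
    have r1 : tm (e - q.length + i) = θ (tm (e - q.length + (q.length - 1 - i))) :=
      hrq i (q.length - 1 - i) (by omega)
    have r2 : tm (e - p.length + i) = θ (tm (e - p.length + (p.length - 1 - i))) :=
      hrp i (p.length - 1 - i) (by omega)
    rw [show e - q.length + (q.length - 1 - i) = e - 1 - i by omega] at r1
    rw [show e - p.length + (p.length - 1 - i) = e - 1 - i by omega] at r2
    rw [r1, r2]
  have hInj : Set.InjOn g P := by
    intro p hp q hq he
    rcases lt_trichotomy p.length q.length with hl | hl | hl
    · exact absurd (key q hq p hp he.symm hl) (by simp)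
    · obtain ⟨⟨hle_p, hwp⟩, _⟩ := hspec p hp
      obtain ⟨⟨hle_q, hwq⟩, _⟩ := hspec q hq
      rw [hwp, hwq, hl, he]
    · exact absurd (key p hp q hq he hl) (by simp)
  have hMaps : ∀ p ∈ P, g p ∈ Finset.range (n + 1) \ M := by
    intro p hp
    obtain ⟨⟨hle_p, hwp⟩, hmin_p⟩ := hspec p hp
    rw [Finset.mem_sdiff, Finset.mem_range]
    constructor
    · -- g p ≤ n
      obtain ⟨a, ha, hpw⟩ := infix_win hp.1
      have hwit : p.length ≤ a + p.length ∧ p = win ((a + p.length) - p.length) p.length :=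
        ⟨by omega, by rw [Nat.add_sub_cancel]; exact hpw⟩
      have hgle : g p ≤ a + p.length := by
        rw [hgdef]
        simp only [dif_pos (hg p hp)]
        exact Nat.find_min' _ hwit
      omega
    · intro hmem
      rw [hM] at hmem
      obtain ⟨m, hm, hgp⟩ := Finset.mem_image.mp hmem
      simp only [Finset.mem_Icc] at hm
      rcases Nat.eq_zero_or_pos p.length with hz | hz
      · -- p = [], so g p = 0, contradiction with g p = K*4^m+1 > 0
        have h0 : ¬ (0 < g p) := by
          intro h0
          exact hmin_p 0 h0 ⟨by omega, by
            rw [hz] at hwp ⊢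
            simpa [win] using hwp⟩
        omega
      · have hpal := palin_win (θ := θ) (hwp ▸ hp.2)
        obtain ⟨b, hb, hocc⟩ := hcl m (g p - p.length) p.length hm.1 hm.2 hz
          (by omega) hpal
        refine hmin_p (b + p.length) (by omega) ⟨by omega, ?_⟩
        rw [Nat.add_sub_cancel, occ_win_eq hocc]
        exact hwp
  have himg : g '' P ⊆ ↑(Finset.range (n + 1) \ M) := by
    rintro x ⟨p, hp, rfl⟩
    exact Finset.mem_coe.mpr (hMaps p hp)
  have hcard : Set.ncard P ≤ n + 1 - R := by
    calc Set.ncard P = Set.ncard (g '' P) := (Set.ncard_image_of_injOn hInj).symm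
      _ ≤ Set.ncard (↑(Finset.range (n + 1) \ M) : Set ℕ) :=
          Set.ncard_le_ncard himg (Finset.finite_toSet _)
      _ = (Finset.range (n + 1) \ M).card := Set.ncard_coe_finset _
      _ = (n + 1) - M.card := by rw [Finset.card_sdiff_of_subset hMsub, Finset.card_range]
      _ = n + 1 - R := by rw [hMcard]
  have hRn : R ≤ n + 1 := by
    have := Finset.card_le_card hMsub
    rw [hMcard, Finset.card_range] at this
    omega
  omega

end Count

/-- For every involutive antimorphism `Θ` of `{0,1}*` (induced by an
involutive letter map `θ`), the Thue-Morse word has infinite `Θ`-defect, i.e. it is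
not almost `Θ`-rich. -/
theorem thueMorse_not_almost_rich (θ : Bool → Bool) (hθ : Function.Involutive θ) :
    ¬ ∃ B : ℤ, ∀ w : List Bool, IsFactor tm w → defect θ w ≤ B := by
  rintro ⟨B, hB⟩
  set R := B.toNat + 3 with hR
  have hR1 : 1 ≤ R := by omega
  -- dichotomy for θ
  have hθcases : θ = id ∨ θ = (fun b => !b) := by
    rcases hf : θ false <;> rcases ht : θ true
    · exfalso
      have := hθ true
      rw [ht, hf] at this
      exact Bool.false_ne_true this
    · left; funext b; cases b <;> simp [hf, ht]
    · right; funext b; cases b <;> simp [hf, ht]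
    · exfalso
      have := hθ false
      rw [hf, ht] at this
      exact Bool.false_ne_true this.symm
  -- in either case we get the counting bound with suitable K
  obtain ⟨K, hK3, hcount⟩ :
      ∃ K, 3 ≤ K ∧ Set.ncard (palFactors θ (win 0 (K * 4^R + 1))) + R ≤ K * 4^R + 2 := by
    rcases hθcases with rfl | rfl
    · refine ⟨6, by norm_num, pal_count _ 6 R (by norm_num) hR1 ?_⟩
      intro m a ℓ hm1 hmR hℓ hend hpal
      obtain ⟨m', rfl⟩ : ∃ m', m = m' + 1 := ⟨m - 1, by omega⟩
      exact (claimsAP m').2 a ℓ hℓ hend hpal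
    · refine ⟨3, by norm_num, pal_count _ 3 R (by norm_num) hR1 ?_⟩
      intro m a ℓ hm1 hmR hℓ hend hpal
      obtain ⟨m', rfl⟩ : ∃ m', m = m' + 1 := ⟨m - 1, by omega⟩
      exact (claimsAP m').1 a ℓ hℓ hend hpal
  set n := K * 4^R + 1 with hn
  have hfac := factor_win n
  have hdef := hB (win 0 n) hfac
  have hγ := gamma_le θ (win 0 n)
  have hRn : R ≤ n + 1 := by
    have h1 : R < 2^R := Nat.lt_two_pow_self (n := R)
    have h2 : (2:ℕ)^R ≤ 4^R := Nat.pow_le_pow_left (by norm_num) R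
    have h3 : 4^R ≤ K * 4^R := Nat.le_mul_of_pos_left _ (by omega)
    omega
  have hcardN : Set.ncard (palFactors θ (win 0 n)) ≤ n + 1 - R := by
    omega
  have hcard : (Set.ncard (palFactors θ (win 0 n)) : ℤ) ≤ (n : ℤ) + 1 - (R : ℤ) := by
    omega
  have hdef2 : (n : ℤ) + 1 - (gammaTheta θ (win 0 n) : ℤ)
      - (Set.ncard (palFactors θ (win 0 n)) : ℤ) ≤ B := by
    have : defect θ (win 0 n) = (n : ℤ) + 1 - (gammaTheta θ (win 0 n) : ℤ)
        - (Set.ncard (palFactors θ (win 0 n)) : ℤ) := by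
      rw [defect, win_length]
    rwa [this] at hdef
  clear hdef
  have hγ' : (gammaTheta θ (win 0 n) : ℤ) ≤ 2 := by exact_mod_cast hγ
  have hBtoNat : (B : ℤ) ≤ B.toNat := Int.self_le_toNat B
  have hRB : (R : ℤ) = (B.toNat : ℤ) + 3 := by rw [hR]; push_cast; ring
  omega
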